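/- Under the assumptions of the clipping lemma, for every R ⊆ N: max{wᵀx : x ∈ P, x(e) = 0 ∀e ∈ R} = max{(w − χ^R)ᵀx : x ∈ P}. That is, interdicting the set R is equivalent to subtracting its characteristic vector from the objective. -/

import Mathlib

open Finset

/-- Iterated clipping: we can zero out all coordinates in a finite set `S`,
losing at most `∑ e ∈ S, x e` in the objective. -/
lemma interdiction_clip {n : ℕ} (X : Set (Fin n → ℝ))
    (hXpos : ∀ x ∈ X, ∀ i, 0 ≤ x i) (w : Fin n → ℝ)
    (hwdc : ∀ x ∈ X, ∀ e : Fin n, 0 < x e →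
      ∃ x' ∈ X, (∀ i, x' i ≤ x i) ∧ x' e = 0 ∧
        ∑ i, w i * x' i ≥ ∑ i, w i * x i - x e)
    (S : Finset (Fin n)) :
    ∀ x ∈ X, ∃ y ∈ X, (∀ i, y i ≤ x i) ∧ (∀ e ∈ S, y e = 0) ∧
      ∑ i, w i * x i - ∑ e ∈ S, x e ≤ ∑ i, w i * y i := by
  classical
  induction S using Finset.induction_on with
  | empty =>
    intro x hx
    exact ⟨x, hx, fun i => le_rfl, by simp, by simp⟩
  | @insert a S haS ih =>
    intro x hx
    obtain ⟨y, hyX, hyle, hyzero, hysum⟩ := ih x hx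
    rw [Finset.sum_insert haS]
    have hxa : 0 ≤ x a := hXpos x hx a
    rcases eq_or_lt_of_le (hXpos y hyX a) with hya | hya
    · refine ⟨y, hyX, hyle, ?_, by linarith⟩
      intro e he
      rcases Finset.mem_insert.mp he with rfl | he'
      · exact hya.symm
      · exact hyzero e he'
    · obtain ⟨y', hy'X, hy'le, hy'a, hy'sum⟩ := hwdc y hyX a hya
      refine ⟨y', hy'X, fun i => (hy'le i).trans (hyle i), ?_, ?_⟩
      · intro e he
        rcases Finset.mem_insert.mp he with rfl | he'
        · exact hy'a
        · exact le_antisymm ((hy'le e).trans_eq (hyzero e he'))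
            (hXpos y' hy'X e)
      · have hya' : y a ≤ x a := hyle a
        have := hy'sum
        linarith

theorem interdiction_eq_objective_shift {n : ℕ}
    (X : Set (Fin n → ℝ)) (hXpos : ∀ x ∈ X, ∀ i, 0 ≤ x i)
    (hXne : X.Nonempty) (hXbdd : Bornology.IsBounded X)
    (w : Fin n → ℝ) (hw : ∀ i, w i = 0 ∨ w i = 1)
    (hwdc : ∀ x ∈ X, ∀ e : Fin n, 0 < x e →
      ∃ x' ∈ X, (∀ i, x' i ≤ x i) ∧ x' e = 0 ∧
        ∑ i, w i * x' i ≥ ∑ i, w i * x i - x e)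
    (hext : Set.extremePoints ℝ (convexHull ℝ X) ⊆ X)
    (R : Finset (Fin n)) :
    sSup {v : ℝ | ∃ x ∈ convexHull ℝ X, (∀ e ∈ R, x e = 0) ∧ v = ∑ i, w i * x i} =
      sSup {v : ℝ | ∃ x ∈ convexHull ℝ X,
        v = ∑ i, (w i - if i ∈ R then (1 : ℝ) else 0) * x i} := by
  classical
  set A := {v : ℝ | ∃ x ∈ convexHull ℝ X, (∀ e ∈ R, x e = 0) ∧ v = ∑ i, w i * x i}
    with hA
  set B := {v : ℝ | ∃ x ∈ convexHull ℝ X,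
      v = ∑ i, (w i - if i ∈ R then (1 : ℝ) else 0) * x i} with hB
  -- The objective rewrites as `∑ w x − ∑_{e∈R} x e`.
  have key : ∀ x : Fin n → ℝ,
      ∑ i, (w i - if i ∈ R then (1 : ℝ) else 0) * x i
        = ∑ i, w i * x i - ∑ e ∈ R, x e := by
    intro x
    have h1 : ∑ i, (if i ∈ R then (1 : ℝ) else 0) * x i = ∑ e ∈ R, x e := by
      simp only [ite_mul, one_mul, zero_mul]
      rw [Finset.sum_ite_mem, Finset.univ_inter]
    calc ∑ i, (w i - if i ∈ R then (1 : ℝ) else 0) * x i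
        = ∑ i, (w i * x i - (if i ∈ R then (1 : ℝ) else 0) * x i) := by
          apply Finset.sum_congr rfl; intros; ring
      _ = ∑ i, w i * x i - ∑ i, (if i ∈ R then (1 : ℝ) else 0) * x i :=
          Finset.sum_sub_distrib _ _
      _ = ∑ i, w i * x i - ∑ e ∈ R, x e := by rw [h1]
  -- A ⊆ B
  have hAB : A ⊆ B := by
    rintro v ⟨x, hx, hxR, rfl⟩
    refine ⟨x, hx, ?_⟩
    rw [key]
    have : ∑ e ∈ R, x e = 0 := Finset.sum_eq_zero hxR
    rw [this, sub_zero]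
  -- bound on coordinates of elements of X
  obtain ⟨r, hr⟩ := hXbdd.subset_closedBall (0 : Fin n → ℝ)
  have hcoord : ∀ t ∈ X, ∀ i, |t i| ≤ r := by
    intro t ht i
    have h1 : ‖t‖ ≤ r := by
      have := hr ht
      rwa [Metric.mem_closedBall, dist_zero_right] at this
    calc |t i| = ‖t i‖ := (Real.norm_eq_abs _).symm
      _ ≤ ‖t‖ := norm_le_pi_norm t i
      _ ≤ r := h1
  -- linear functionals are bounded above on X by a uniform constant
  have hbound : ∀ c : Fin n → ℝ, ∀ t ∈ X, ∑ i, c i * t i ≤ ∑ i : Fin n, |c i| * r := by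
    intro c t ht
    apply Finset.sum_le_sum
    intro i _
    calc c i * t i ≤ |c i * t i| := le_abs_self _
      _ = |c i| * |t i| := abs_mul _ _
      _ ≤ |c i| * r := by
          exact mul_le_mul_of_nonneg_left (hcoord t ht i) (abs_nonneg _)
  -- half-spaces defined by these functionals are convex
  have hlin : ∀ c : Fin n → ℝ, IsLinearMap ℝ (fun x : Fin n → ℝ => ∑ i, c i * x i) := by
    intro c
    constructor
    · intro x y
      rw [← Finset.sum_add_distrib]
      apply Finset.sum_congr rfl; intros; simp [Pi.add_apply]; ring
    · intro m x
      simp only [Pi.smul_apply, smul_eq_mul, Finset.mul_sum]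
      apply Finset.sum_congr rfl; intros; ring
  have hhalf : ∀ c : Fin n → ℝ, ∀ M : ℝ,
      (∀ t ∈ X, ∑ i, c i * t i ≤ M) →
      ∀ x ∈ convexHull ℝ X, ∑ i, c i * x i ≤ M := by
    intro c M hXle x hx
    have : convexHull ℝ X ⊆ {x : Fin n → ℝ | ∑ i, c i * x i ≤ M} :=
      convexHull_min hXle (convex_halfSpace_le (hlin c) M)
    exact this hx
  -- B is bounded above
  have hBbdd : BddAbove B := by
    refine ⟨∑ i : Fin n, |w i - if i ∈ R then (1 : ℝ) else 0| * r, ?_⟩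
    rintro v ⟨x, hx, rfl⟩
    exact hhalf _ _ (hbound _) x hx
  have hAbdd : BddAbove A := hBbdd.mono hAB
  -- A is nonempty
  obtain ⟨x₀, hx₀⟩ := hXne
  obtain ⟨y₀, hy₀X, _, hy₀R, _⟩ := interdiction_clip X hXpos w hwdc R x₀ hx₀
  have hAne : A.Nonempty :=
    ⟨∑ i, w i * y₀ i, y₀, subset_convexHull ℝ X hy₀X, hy₀R, rfl⟩
  have hBne : B.Nonempty := hAB hAne.choose_spec |> fun h => ⟨_, h⟩
  -- sSup A ≤ sSup B
  refine le_antisymm (csSup_le_csSup hBbdd hAne hAB) ?_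
  -- sSup B ≤ sSup A : for each t ∈ X the clipped objective is ≤ sSup A
  have hXle : ∀ t ∈ X, ∑ i, (w i - if i ∈ R then (1 : ℝ) else 0) * t i ≤ sSup A := by
    intro t ht
    obtain ⟨y, hyX, _, hyR, hysum⟩ := interdiction_clip X hXpos w hwdc R t ht
    have hmem : (∑ i, w i * y i) ∈ A :=
      ⟨y, subset_convexHull ℝ X hyX, hyR, rfl⟩
    calc ∑ i, (w i - if i ∈ R then (1 : ℝ) else 0) * t i
        = ∑ i, w i * t i - ∑ e ∈ R, t e := key t
      _ ≤ ∑ i, w i * y i := hysum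
      _ ≤ sSup A := le_csSup hAbdd hmem
  apply csSup_le hBne
  rintro v ⟨x, hx, rfl⟩
  exact hhalf _ _ hXle x hx
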